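/- Consider the cccq channel taking three bits (x,y,z) ∈ {0,1}³ to the single-qubit pure states ψ_{x,y,z} given by: 000→|0⟩, 001→|+⟩, 010→|1⟩, 011→|−⟩, 100→|1⟩, 101→|−⟩, 110→|0⟩, 111→|+⟩, where |±⟩ = (|0⟩±|1⟩)/√2. Let ρ^{XYZB} be the classical–quantum state obtained from independent uniform input distributions on x, y, z. Then: (i) H_min(B|ZY)_ρ = H(B|ZY)_ρ = 1, H_min(B|Z)_ρ = H(B|Z)_ρ = 1, H_min(B|XZ)_ρ = H(B|XZ)_ρ = 1, H_min(B|X)_ρ = H(B|X)_ρ = 1; (ii) H(B|XYZ)_ρ = 0; and (iii) H(B|XY)_ρ = H₂(cos²(π/8)), where H₂(p) = −p log₂ p − (1−p) log₂(1−p). -/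

import Mathlib

open scoped BigOperators ComplexOrder

noncomputable section

namespace QIC

/-- von Neumann entropy in bits, via eigenvalues (convention `0·log 0 = 0`). -/
def vnEntropy {m : Type*} [Fintype m] [DecidableEq m] (ρ : Matrix m m ℂ) : ℝ :=
  if h : ρ.IsHermitian then -∑ i, h.eigenvalues i * Real.logb 2 (h.eigenvalues i) else 0

/-- min-entropy in bits: `−log₂` of the largest eigenvalue. -/
def minEntropy {m : Type*} [Fintype m] [DecidableEq m] (ρ : Matrix m m ℂ) : ℝ :=
  if h : ρ.IsHermitian then -Real.logb 2 (⨆ i, h.eigenvalues i) else 0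

/-- A density operator: positive semidefinite with unit trace. -/
def IsDensity {m : Type*} [Fintype m] [DecidableEq m] (ρ : Matrix m m ℂ) : Prop :=
  ρ.PosSemidef ∧ ρ.trace = 1

/-- A POVM: a finite family of positive semidefinite operators summing to the identity. -/
def IsPOVM {ι m : Type*} [Fintype ι] [Fintype m] [DecidableEq m]
    (Λ : ι → Matrix m m ℂ) : Prop :=
  (∀ i, (Λ i).PosSemidef) ∧ ∑ i, Λ i = 1

/-- A probability distribution on a finite alphabet. -/
def IsProbDist {X : Type*} [Fintype X] (p : X → ℝ) : Prop :=
  (∀ x, 0 ≤ p x) ∧ ∑ x, p x = 1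

/-- `n`-fold tensor product of matrices on `Fin d`. -/
def tensorPow {d n : ℕ} (f : Fin n → Matrix (Fin d) (Fin d) ℂ) :
    Matrix (Fin n → Fin d) (Fin n → Fin d) ℂ :=
  Matrix.of fun i j => ∏ k, f k (i k) (j k)

/-- The positive semidefinite square root, as `Matrix.PosSemidef.sqrt` was defined in Mathlib
(removed since). -/
def PosSemidef.sqrt {m : Type*} [Fintype m] [DecidableEq m] {A : Matrix m m ℂ}
    (hA : A.PosSemidef) : Matrix m m ℂ :=
  hA.1.eigenvectorUnitary.1 * Matrix.diagonal ((↑) ∘ Real.sqrt ∘ hA.1.eigenvalues) *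
    (star hA.1.eigenvectorUnitary : Matrix m m ℂ)

/-- Positive semidefinite square root (zero on non-PSD matrices). -/
def msqrt {m : Type*} [Fintype m] [DecidableEq m] (X : Matrix m m ℂ) : Matrix m m ℂ :=
  open Classical in if h : X.PosSemidef then PosSemidef.sqrt h else 0

/-- Trace norm `‖X‖₁ = Tr √(XᴴX)`. -/
def traceNorm {m : Type*} [Fintype m] [DecidableEq m] (X : Matrix m m ℂ) : ℝ :=
  (PosSemidef.sqrt (Matrix.posSemidef_conjTranspose_mul_self X)).trace.re

/-- Loewner order: `A ≤ B` iff `B − A` is positive semidefinite. -/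
def loewnerLE {m : Type*} [Fintype m] [DecidableEq m] (A B : Matrix m m ℂ) : Prop :=
  (B - A).PosSemidef

/-- Outer product `|ψ⟩⟨ψ|` of a vector. -/
def outer {m : Type*} (v : m → ℂ) : Matrix m m ℂ :=
  Matrix.of fun i j => v i * star (v j)

/-- Binary entropy function `H₂(p) = −p log₂ p − (1−p) log₂(1−p)`. -/
def binEnt (p : ℝ) : ℝ :=
  -(p * Real.logb 2 p) - (1 - p) * Real.logb 2 (1 - p)

/-- The "BB84" cccq multiple access channel: three input bits `x, y, z` produce the qubit
states `000→|0⟩, 001→|+⟩, 010→|1⟩, 011→|−⟩, 100→|1⟩, 101→|−⟩, 110→|0⟩, 111→|+⟩`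
(the bit `x⊕y` encoded in the basis selected by `z`). -/
def bb84 (x y z : Fin 2) : Fin 2 → ℂ :=
  if z = 0 then
    (if x = y then ![1, 0] else ![0, 1])
  else
    (if x = y then ![(Real.sqrt 2 : ℂ)⁻¹, (Real.sqrt 2 : ℂ)⁻¹]
     else ![(Real.sqrt 2 : ℂ)⁻¹, -(Real.sqrt 2 : ℂ)⁻¹])

/- helper lemmas -/
section Helpers
open Matrix

lemma eig_mem {m : Type*} [Fintype m] [DecidableEq m] {A : Matrix m m ℂ}
    (h : A.IsHermitian) {a b : ℝ}
    (hq : (A - (a:ℂ) • 1) * (A - (b:ℂ) • 1) = 0) (i : m) :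
    h.eigenvalues i = a ∨ h.eigenvalues i = b := by
  set l : ℝ := h.eigenvalues i with hl
  set v : m → ℂ := ⇑(h.eigenvectorBasis i) with hvdef
  have hv : A *ᵥ v = (l : ℂ) • v := by
    rw [h.mulVec_eigenvectorBasis i]
    funext j
    show l • (v j) = (l:ℂ) * v j
    exact Complex.real_smul
  have e1 : (A - (b:ℂ) • 1) *ᵥ v = ((l : ℂ) - b) • v := by
    rw [Matrix.sub_mulVec, hv, Matrix.smul_mulVec, Matrix.one_mulVec, sub_smul]
  have e2 : ((A - (a:ℂ) • 1) * (A - (b:ℂ) • 1)) *ᵥ v = 0 := by rw [hq]; simp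
  rw [← Matrix.mulVec_mulVec, e1, Matrix.mulVec_smul, Matrix.sub_mulVec, hv,
    Matrix.smul_mulVec, Matrix.one_mulVec, ← sub_smul, smul_smul] at e2
  have hv0 : v ≠ 0 := by
    intro hz
    apply h.eigenvectorBasis.orthonormal.ne_zero i
    ext j
    exact congrFun hz j
  rcases smul_eq_zero.mp e2 with hc | hc
  · rcases mul_eq_zero.mp hc with hc' | hc'
    · right; have := sub_eq_zero.mp hc'; exact_mod_cast this
    · left; have := sub_eq_zero.mp hc'; exact_mod_cast this
  · exact absurd hc hv0

lemma trace_eq_sum_eig {m : Type*} [Fintype m] [DecidableEq m] {A : Matrix m m ℂ}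
    (h : A.IsHermitian) : A.trace = ∑ i, (h.eigenvalues i : ℂ) := by
  conv_lhs => rw [h.spectral_theorem]
  rw [Unitary.conjStarAlgAut_apply]
  rw [Matrix.trace_mul_cycle]
  rw [Unitary.coe_star_mul_self, Matrix.one_mul, Matrix.trace_diagonal]
  rfl

lemma outer_herm {m : Type*} [Fintype m] [DecidableEq m] (v : m → ℂ) :
    (outer v).IsHermitian := by
  ext i j
  simp [outer, Matrix.conjTranspose_apply, mul_comm]

lemma s2 : (Real.sqrt 2 : ℂ) * (Real.sqrt 2 : ℂ) = 2 := by
  norm_cast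
  rw [Real.mul_self_sqrt] <;> norm_num

lemma star_s : star ((Real.sqrt 2 : ℂ)⁻¹) = (Real.sqrt 2 : ℂ)⁻¹ := by
  simp [Complex.star_def, Complex.conj_ofReal]

lemma sinv : ((Real.sqrt 2 : ℂ))⁻¹ * ((Real.sqrt 2 : ℂ))⁻¹ = 1/2 := by
  rw [← mul_inv, s2]; norm_num

lemma logb_half : Real.logb 2 (1/2 : ℝ) = -1 := by
  rw [show (1:ℝ)/2 = 2⁻¹ by norm_num, Real.logb_inv, Real.logb_self_eq_one] <;> norm_num

lemma binEnt_half : binEnt (1/2) = 1 := by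
  rw [binEnt]
  norm_num [logb_half]

/-- Entropy of a 2×2 density matrix whose eigenvalues are `{p, 1-p}`. -/
lemma vnEntropy_quad {A : Matrix (Fin 2) (Fin 2) ℂ} (h : A.IsHermitian) {p : ℝ}
    (hq : (A - (p:ℂ) • 1) * (A - ((1-p : ℝ):ℂ) • 1) = 0) (ht : A.trace = 1) :
    vnEntropy A = binEnt p := by
  rw [vnEntropy, dif_pos h]
  have hsum : h.eigenvalues 0 + h.eigenvalues 1 = 1 := by
    have h2 := trace_eq_sum_eig h
    rw [ht, Fin.sum_univ_two] at h2
    exact_mod_cast h2.symm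
  rcases eig_mem h hq 0 with h0 | h0
  · have h1 : h.eigenvalues 1 = 1 - p := by linarith
    rw [Fin.sum_univ_two, h0, h1, binEnt]; ring
  · have h1 : h.eigenvalues 1 = p := by linarith
    rw [Fin.sum_univ_two, h0, h1, binEnt]; ring

/-- Entropy of a projector is zero. -/
lemma vnEntropy_proj {m : Type*} [Fintype m] [DecidableEq m] {A : Matrix m m ℂ}
    (h : A.IsHermitian) (hproj : A * A = A) : vnEntropy A = 0 := by
  rw [vnEntropy, dif_pos h, neg_eq_zero]
  apply Finset.sum_eq_zero
  intro i _
  have hq : (A - ((0:ℝ):ℂ) • 1) * (A - ((1:ℝ):ℂ) • 1) = 0 := by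
    push_cast
    rw [zero_smul, sub_zero, one_smul, Matrix.mul_sub, hproj, Matrix.mul_one, sub_self]
  rcases eig_mem h hq i with h0 | h0 <;> rw [h0] <;> simp

lemma half_smul_one : ((1:ℝ)/2) • (1 : Matrix (Fin 2) (Fin 2) ℂ)
    = (((1:ℝ)/2 : ℝ) : ℂ) • (1 : Matrix (Fin 2) (Fin 2) ℂ) := by
  ext i j
  show ((1:ℝ)/2) • ((1 : Matrix (Fin 2) (Fin 2) ℂ) i j) = _
  rw [Complex.real_smul]
  rfl

lemma half_herm : (((1:ℝ)/2) • (1 : Matrix (Fin 2) (Fin 2) ℂ)).IsHermitian := by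
  rw [half_smul_one]
  ext i j
  fin_cases i <;> fin_cases j <;>
    simp [Matrix.conjTranspose_apply, Matrix.one_apply, Complex.star_def]

lemma half_quad : ((((1:ℝ)/2) • (1 : Matrix (Fin 2) (Fin 2) ℂ)) - (((1:ℝ)/2 : ℝ):ℂ) • 1) *
    ((((1:ℝ)/2) • (1 : Matrix (Fin 2) (Fin 2) ℂ)) - (((1-(1:ℝ)/2 : ℝ)):ℂ) • 1) = 0 := by
  rw [half_smul_one]
  norm_num

lemma half_trace : (((1:ℝ)/2) • (1 : Matrix (Fin 2) (Fin 2) ℂ)).trace = 1 := by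
  rw [half_smul_one, Matrix.trace_smul, Matrix.trace_one]
  norm_num

lemma vnEntropy_half : vnEntropy (((1:ℝ)/2) • (1 : Matrix (Fin 2) (Fin 2) ℂ)) = 1 := by
  have := vnEntropy_quad half_herm (p := 1/2) (by simpa using half_quad) half_trace
  rwa [binEnt_half] at this

lemma minEntropy_half : minEntropy (((1:ℝ)/2) • (1 : Matrix (Fin 2) (Fin 2) ℂ)) = 1 := by
  rw [minEntropy, dif_pos half_herm]
  have heig : ∀ i, half_herm.eigenvalues i = 1/2 := by
    intro i
    have := eig_mem half_herm (a := 1/2) (b := 1 - 1/2) (by simpa using half_quad) i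
    rcases this with h | h <;> rw [h] <;> norm_num
  have : (⨆ i, half_herm.eigenvalues i) = 1/2 := by
    rw [funext heig]
    exact ciSup_const
  rw [this, logb_half]
  norm_num

/-- `(A-p)(A-(1-p)) = A² - A + p(1-p)•1` when the latter vanishes. -/
lemma quad_of_sq {A : Matrix (Fin 2) (Fin 2) ℂ} {p : ℝ} (hm : p * (1-p) = 1/8)
    (h2 : A * A - A + (((1:ℝ)/8 : ℝ):ℂ) • 1 = 0) :
    (A - (p:ℂ) • 1) * (A - ((1-p : ℝ):ℂ) • 1) = 0 := by
  have key : (A - (p:ℂ) • 1) * (A - ((1-p : ℝ):ℂ) • 1)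
      = A * A - A + (((1:ℝ)/8 : ℝ):ℂ) • 1 := by
    simp only [Matrix.sub_mul, Matrix.mul_sub, Matrix.smul_mul, Matrix.mul_smul,
      Matrix.one_mul, Matrix.mul_one, smul_smul, smul_sub]
    have hA : (p:ℂ) • A + ((1-p : ℝ):ℂ) • A = A := by
      have h1 : (p:ℂ) + ((1-p : ℝ):ℂ) = 1 := by push_cast; ring
      rw [← add_smul, h1, one_smul]
    have hc : ((1-p : ℝ):ℂ) * (p:ℂ) = (((1:ℝ)/8 : ℝ):ℂ) := by
      rw [← Complex.ofReal_mul, mul_comm, hm]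
    rw [hc]
    have habel : A * A - (p:ℂ) • A - (((1-p : ℝ):ℂ) • A - (((1:ℝ)/8 : ℝ):ℂ) • 1)
        = A * A - ((p:ℂ) • A + ((1-p : ℝ):ℂ) • A) + (((1:ℝ)/8 : ℝ):ℂ) • 1 := by abel
    rw [habel, hA]
  rw [key, h2]

lemma cos_sq_pi8 : Real.cos (Real.pi/8) ^ 2 = 1/2 + Real.sqrt 2 / 4 := by
  rw [Real.cos_sq, show 2 * (Real.pi/8) = Real.pi/4 by ring, Real.cos_pi_div_four]
  ring

lemma cos_sq_pi8_mul : Real.cos (Real.pi/8) ^ 2 * (1 - Real.cos (Real.pi/8) ^ 2) = 1/8 := by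
  rw [cos_sq_pi8]
  have h2 : Real.sqrt 2 ^ 2 = 2 := Real.sq_sqrt (by norm_num)
  nlinarith [h2]

end Helpers

section HelpersM

lemma outer_mul_outer {m : Type*} [Fintype m] (v : m → ℂ)
    (h : ∑ k, v k * star (v k) = 1) : outer v * outer v = outer v := by
  ext i j
  show ∑ k, (v i * star (v k)) * (v k * star (v j)) = v i * star (v j)
  calc ∑ k, (v i * star (v k)) * (v k * star (v j))
      = (v i * star (v j)) * ∑ k, v k * star (v k) := by
        rw [Finset.mul_sum]
        congr 1 with k
        ring
    _ = v i * star (v j) := by rw [h, mul_one]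


lemma M1_herm : (!![3/4, 1/4; 1/4, 1/4] : Matrix (Fin 2) (Fin 2) ℂ).IsHermitian := by
  ext i j
  fin_cases i <;> fin_cases j <;> simp [Matrix.conjTranspose_apply, Complex.star_def] <;> norm_num

lemma M2_herm : (!![1/4, -1/4; -1/4, 3/4] : Matrix (Fin 2) (Fin 2) ℂ).IsHermitian := by
  ext i j
  fin_cases i <;> fin_cases j <;> simp [Matrix.conjTranspose_apply, Complex.star_def] <;> norm_num

lemma M1_sq : (!![3/4, 1/4; 1/4, 1/4] : Matrix (Fin 2) (Fin 2) ℂ) * !![3/4, 1/4; 1/4, 1/4]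
    - !![3/4, 1/4; 1/4, 1/4] + (((1:ℝ)/8 : ℝ):ℂ) • 1 = 0 := by
  ext i j
  fin_cases i <;> fin_cases j <;>
    simp [Matrix.mul_apply, Fin.sum_univ_two, Matrix.one_apply] <;> norm_num

lemma M2_sq : (!![1/4, -1/4; -1/4, 3/4] : Matrix (Fin 2) (Fin 2) ℂ) * !![1/4, -1/4; -1/4, 3/4]
    - !![1/4, -1/4; -1/4, 3/4] + (((1:ℝ)/8 : ℝ):ℂ) • 1 = 0 := by
  ext i j
  fin_cases i <;> fin_cases j <;>
    simp [Matrix.mul_apply, Fin.sum_univ_two, Matrix.one_apply] <;> norm_num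

lemma M1_ent : vnEntropy (!![3/4, 1/4; 1/4, 1/4] : Matrix (Fin 2) (Fin 2) ℂ)
    = binEnt (Real.cos (Real.pi/8) ^ 2) :=
  vnEntropy_quad M1_herm (quad_of_sq cos_sq_pi8_mul M1_sq)
    (by rw [Matrix.trace_fin_two]; norm_num)

lemma M2_ent : vnEntropy (!![1/4, -1/4; -1/4, 3/4] : Matrix (Fin 2) (Fin 2) ℂ)
    = binEnt (Real.cos (Real.pi/8) ^ 2) :=
  vnEntropy_quad M2_herm (quad_of_sq cos_sq_pi8_mul M2_sq)
    (by rw [Matrix.trace_fin_two]; norm_num)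

end HelpersM

set_option maxHeartbeats 1000000 in
/-- **Entropy computations for the BB84 cccq multiple access channel with uniform inputs**:
(i) the min-entropies `H_min(B|ZY), H_min(B|Z), H_min(B|XZ), H_min(B|X)` all equal the
corresponding von Neumann conditional entropies and take the maximal value `1`;
(ii) `H(B|XYZ) = 0`; (iii) `H(B|XY) = H₂(cos²(π/8))`. -/
theorem bb84_entropies :
    -- (i) conditioning on `Z,Y`
    ((⨅ z, ⨅ y, minEntropy (∑ x, ((1:ℝ)/2) • outer (bb84 x y z))) = 1 ∧
     (∑ z, ∑ y, ((1:ℝ)/4) * vnEntropy (∑ x, ((1:ℝ)/2) • outer (bb84 x y z))) = 1 ∧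
     -- conditioning on `Z`
     (⨅ z, minEntropy (∑ x, ∑ y, ((1:ℝ)/4) • outer (bb84 x y z))) = 1 ∧
     (∑ z, ((1:ℝ)/2) * vnEntropy (∑ x, ∑ y, ((1:ℝ)/4) • outer (bb84 x y z))) = 1 ∧
     -- conditioning on `X,Z`
     (⨅ x, ⨅ z, minEntropy (∑ y, ((1:ℝ)/2) • outer (bb84 x y z))) = 1 ∧
     (∑ x, ∑ z, ((1:ℝ)/4) * vnEntropy (∑ y, ((1:ℝ)/2) • outer (bb84 x y z))) = 1 ∧
     -- conditioning on `X`
     (⨅ x, minEntropy (∑ y, ∑ z, ((1:ℝ)/4) • outer (bb84 x y z))) = 1 ∧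
     (∑ x, ((1:ℝ)/2) * vnEntropy (∑ y, ∑ z, ((1:ℝ)/4) • outer (bb84 x y z))) = 1) ∧
    -- (ii) `H(B|XYZ) = 0`
    (∑ x, ∑ y, ∑ z, ((1:ℝ)/8) * vnEntropy (outer (bb84 x y z))) = 0 ∧
    -- (iii) `H(B|XY) = H₂(cos²(π/8))`
    (∑ x, ∑ y, ((1:ℝ)/4) * vnEntropy (∑ z, ((1:ℝ)/2) • outer (bb84 x y z)))
      = binEnt (Real.cos (Real.pi / 8) ^ 2) := by
  have key1 : ∀ y z : Fin 2, (∑ x, ((1:ℝ)/2) • outer (bb84 x y z))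
      = ((1:ℝ)/2) • (1 : Matrix (Fin 2) (Fin 2) ℂ) := by
    intro y z
    fin_cases y <;> fin_cases z <;>
      · ext i j
        fin_cases i <;> fin_cases j <;>
          simp [outer, bb84, Fin.sum_univ_two, Matrix.one_apply, star_s, sinv] <;> norm_num
  have key2 : ∀ z : Fin 2, (∑ x, ∑ y, ((1:ℝ)/4) • outer (bb84 x y z))
      = ((1:ℝ)/2) • (1 : Matrix (Fin 2) (Fin 2) ℂ) := by
    intro z
    fin_cases z <;>
      · ext i j
        fin_cases i <;> fin_cases j <;>
          simp [outer, bb84, Fin.sum_univ_two, Matrix.one_apply, star_s, sinv] <;> norm_num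
  have key3 : ∀ x z : Fin 2, (∑ y, ((1:ℝ)/2) • outer (bb84 x y z))
      = ((1:ℝ)/2) • (1 : Matrix (Fin 2) (Fin 2) ℂ) := by
    intro x z
    fin_cases x <;> fin_cases z <;>
      · ext i j
        fin_cases i <;> fin_cases j <;>
          simp [outer, bb84, Fin.sum_univ_two, Matrix.one_apply, star_s, sinv] <;> norm_num
  have key4 : ∀ x : Fin 2, (∑ y, ∑ z, ((1:ℝ)/4) • outer (bb84 x y z))
      = ((1:ℝ)/2) • (1 : Matrix (Fin 2) (Fin 2) ℂ) := by
    intro x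
    fin_cases x <;>
      · ext i j
        fin_cases i <;> fin_cases j <;>
          simp [outer, bb84, Fin.sum_univ_two, Matrix.one_apply, star_s, sinv] <;> norm_num
  have pure0 : ∀ x y z : Fin 2, vnEntropy (outer (bb84 x y z)) = 0 := by
    intro x y z
    refine vnEntropy_proj (outer_herm _) (outer_mul_outer _ ?_)
    fin_cases x <;> fin_cases y <;> fin_cases z <;>
      simp [bb84, Fin.sum_univ_two, star_s, sinv] <;> norm_num
  have keyM : ∀ x y : Fin 2, vnEntropy (((1:ℝ)/2) • outer (bb84 x y 0) + ((1:ℝ)/2) • outer (bb84 x y 1))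
      = binEnt (Real.cos (Real.pi/8) ^ 2) := by
    intro x y
    rw [← Fin.sum_univ_two (f := fun z => ((1:ℝ)/2) • outer (bb84 x y z))]
    have hcases : (∑ z, ((1:ℝ)/2) • outer (bb84 x y z))
        = (!![3/4, 1/4; 1/4, 1/4] : Matrix (Fin 2) (Fin 2) ℂ)
        ∨ (∑ z, ((1:ℝ)/2) • outer (bb84 x y z))
        = (!![1/4, -1/4; -1/4, 3/4] : Matrix (Fin 2) (Fin 2) ℂ) := by
      fin_cases x <;> fin_cases y <;> [left; right; right; left] <;>
        · ext i j
          fin_cases i <;> fin_cases j <;>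
            simp [outer, bb84, Fin.sum_univ_two, star_s, sinv] <;> norm_num
    rcases hcases with h | h <;> rw [h]
    · exact M1_ent
    · exact M2_ent
  refine ⟨⟨?_, ?_, ?_, ?_, ?_, ?_, ?_, ?_⟩, ?_, ?_⟩
  · simp only [key1, minEntropy_half, ciInf_const]
  · simp only [key1, vnEntropy_half]; norm_num [Fin.sum_univ_two]
  · simp only [key2, minEntropy_half, ciInf_const]
  · simp only [key2, vnEntropy_half]; norm_num [Fin.sum_univ_two]
  · simp only [key3, minEntropy_half, ciInf_const]
  · simp only [key3, vnEntropy_half]; norm_num [Fin.sum_univ_two]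
  · simp only [key4, minEntropy_half, ciInf_const]
  · simp only [key4, vnEntropy_half]; norm_num [Fin.sum_univ_two]
  · simp only [pure0]; norm_num [Fin.sum_univ_two]
  · simp only [keyM, Fin.sum_univ_two]
    ring

end QIC
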